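/- Let X be a geometrically connected smooth proper variety over a field k of characteristic 0 with x ∈ X(k), and let E_2 be the second term of the iterated universal extension of nilpotent vector bundles on X (the universal extension of O_X). Then Ext¹(E_2, O_X) = H¹(X, E_2^∨) is canonically isomorphic to the kernel of the cup product map ∪ : H¹(X, O_X) ⊗ H¹(X, O_X) → H²(X, O_X), up to sign. -/
import Mathlib


open CategoryTheory CategoryTheory.Limits CategoryTheory.Abelian MonoidalCategory

attribute [local instance] CategoryTheory.Limits.HasFiniteBiproducts.of_hasFiniteProducts

universe w v u

variable (k : Type u) [Field k]

/- The category `C` abstracts the category of coherent sheaves on a geometrically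
connected smooth proper variety `X` over a field `k` of characteristic `0`, with unit
object `𝟙_ C = (𝟙_ C : C)_X`; then `Ext^i((𝟙_ C : C)_X, (𝟙_ C : C)_X) = H^i(X, (𝟙_ C : C)_X)` and the composition product
on `Ext` is the cup product. -/
variable {C : Type u} [Category.{v} C] [Abelian C] [Linear k C]
  [MonoidalCategory C] [MonoidalPreadditive C] [HasExt.{w} C]

section Aux

variable {D : Type u} [Category.{v} D] [Abelian D] [HasExt.{w} D]

lemma aux_mk₀_add {X Y : D} (f g : X ⟶ Y) :
    (Ext.mk₀ (f + g) : Ext X Y 0) = Ext.mk₀ f + Ext.mk₀ g := by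
  letI := HasDerivedCategory.standard D
  apply Ext.ext
  rw [Ext.add_hom]
  simp [ShiftedHom.mk₀, Functor.map_add, Preadditive.add_comp]

lemma aux_mk₀_sum {ι : Type} (s : Finset ι) {X Y : D} (f : ι → (X ⟶ Y)) :
    (Ext.mk₀ (∑ i ∈ s, f i) : Ext X Y 0) = ∑ i ∈ s, Ext.mk₀ (f i) := by
  classical
  induction s using Finset.cons_induction with
  | empty => simp
  | cons a s ha ih => rw [Finset.sum_cons, Finset.sum_cons, aux_mk₀_add, ih]

lemma aux_sum_comp {ι : Type} (s : Finset ι) {X Y Z : D} {a b c : ℕ}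
    (α : ι → Ext X Y a) (β : Ext Y Z b) (h : a + b = c) :
    (∑ i ∈ s, α i).comp β h = ∑ i ∈ s, (α i).comp β h := by
  classical
  induction s using Finset.cons_induction with
  | empty => simp
  | cons a s ha ih => rw [Finset.sum_cons, Finset.sum_cons, Ext.add_comp, ih]

lemma aux_comp_sum {ι : Type} (s : Finset ι) {X Y Z : D} {a b c : ℕ}
    (α : Ext X Y a) (β : ι → Ext Y Z b) (h : a + b = c) :
    α.comp (∑ i ∈ s, β i) h = ∑ i ∈ s, α.comp (β i) h := by
  classical
  induction s using Finset.cons_induction with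
  | empty => simp
  | cons a s ha ih => rw [Finset.sum_cons, Finset.sum_cons, Ext.comp_add, ih]

end Aux

/-- **The first Ext group of the second universal extension** (the case `n = 2` of
Proposition 2.19). -/
theorem ext1_of_second_universal_extension_eq_ker_cup
    (ι : Type) [Fintype ι] [DecidableEq ι]
    (hEnd : Function.Bijective (fun a : k => a • 𝟙 (𝟙_ C)))
    (S : ShortComplex C) (hS : S.ShortExact)
    (hX₃ : S.X₃ = 𝟙_ C)
    (e : S.X₁ ≅ ⨁ (fun (_ : ι) => (𝟙_ C)))
    (b : ι → Ext (𝟙_ C : C) (𝟙_ C : C) 1)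
    (δ : (S.X₁ ⟶ (𝟙_ C : C)) → Ext S.X₃ (𝟙_ C : C) 1)
    (hδ : ∀ f, δ f = hS.extClass.comp (Ext.mk₀ f) (add_zero 1))
    (hb : ∀ i : ι, δ (e.hom ≫ biproduct.π _ i) =
      (Ext.mk₀ (eqToHom hX₃)).comp (b i) (zero_add 1))
    (hbasis : Function.Bijective δ)
    (Φ : Ext S.X₂ (𝟙_ C : C) 1 → (ι → Ext (𝟙_ C : C) (𝟙_ C : C) 1))
    (hΦ : ∀ x i, Φ x i = (Ext.mk₀ (biproduct.ι (fun (_ : ι) => (𝟙_ C : C)) i ≫ e.inv ≫ S.f)).comp x (zero_add 1)) :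
    Function.Injective Φ ∧
    Set.range Φ = {c : ι → Ext (𝟙_ C : C) (𝟙_ C : C) 1 |
      (Finset.univ.sum fun i => (b i).comp (c i) rfl) = 0} := by
  classical
  set F : ι → ((𝟙_ C : C) ⟶ S.X₂) := fun i => biproduct.ι (fun (_ : ι) => (𝟙_ C : C)) i ≫ e.inv ≫ S.f with hF
  set H : ι → (S.X₁ ⟶ (𝟙_ C : C)) := fun i => e.hom ≫ biproduct.π (fun (_ : ι) => (𝟙_ C : C)) i with hH
  have hSf : S.f = ∑ i : ι, H i ≫ F i := by
    have : (∑ i : ι, H i ≫ F i) = e.hom ≫ (∑ i : ι, biproduct.π (fun (_ : ι) => (𝟙_ C : C)) i ≫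
        biproduct.ι (fun (_ : ι) => (𝟙_ C : C)) i) ≫ e.inv ≫ S.f := by
      rw [Preadditive.sum_comp, Preadditive.comp_sum]
      simp [hH, hF]
    rw [this, biproduct.total]
    simp
  -- Key: for any z, `(mk₀ S.f).comp z` is the "sum of the components".
  have key : ∀ z : Ext S.X₂ (𝟙_ C : C) 1,
      (Ext.mk₀ S.f).comp z (zero_add 1) =
        ∑ i : ι, (Ext.mk₀ (H i)).comp ((Ext.mk₀ (F i)).comp z (zero_add 1)) (zero_add 1) := by
    intro z
    conv_lhs => rw [hSf]
    rw [aux_mk₀_sum, aux_sum_comp]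
    exact Finset.sum_congr rfl (fun i _ => by rw [Ext.mk₀_comp_mk₀_assoc])
  -- injectivity granule: if all components vanish, z = 0
  have hinj : ∀ z : Ext S.X₂ (𝟙_ C : C) 1,
      (∀ i, (Ext.mk₀ (F i)).comp z (zero_add 1) = 0) → z = 0 := by
    intro z hz
    have h0 : (Ext.mk₀ S.f).comp z (zero_add 1) = 0 := by
      rw [key]
      exact Finset.sum_eq_zero fun i _ => by rw [hz i, Ext.comp_zero]
    obtain ⟨w, hw⟩ := Ext.contravariant_sequence_exact₂ hS (𝟙_ C : C) z h0
    obtain ⟨u, hu⟩ := hbasis.2 w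
    rw [hδ] at hu
    rw [← hw, ← hu, hS.comp_extClass_assoc]
  -- computation of the cup-product sum of components, for any z
  have cup : ∀ z : Ext S.X₂ (𝟙_ C : C) 1,
      (Ext.mk₀ (eqToHom hX₃)).comp
        (∑ i : ι, (b i).comp ((Ext.mk₀ (F i)).comp z (zero_add 1)) rfl) (zero_add 2) =
        hS.extClass.comp ((Ext.mk₀ S.f).comp z (zero_add 1)) rfl := by
    intro z
    rw [aux_comp_sum, key, aux_comp_sum]
    refine Finset.sum_congr rfl (fun i _ => ?_)
    rw [← Ext.comp_assoc (Ext.mk₀ (eqToHom hX₃)) (b i)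
      ((Ext.mk₀ (F i)).comp z (zero_add 1)) (zero_add 1) rfl (by omega),
      ← hb i, hδ,
      Ext.comp_assoc hS.extClass (Ext.mk₀ (H i)) ((Ext.mk₀ (F i)).comp z (zero_add 1))
        (add_zero 1) (zero_add 1) (by omega)]
  -- extension class composed with the connecting map vanishes
  have extvan : ∀ z : Ext S.X₂ (𝟙_ C : C) 1,
      hS.extClass.comp ((Ext.mk₀ S.f).comp z (zero_add 1)) rfl = 0 := fun z =>
    hS.extClass_comp_assoc z
  -- cancellation of the iso `mk₀ (eqToHom hX₃)`
  have cancel : ∀ {n : ℕ} (T T' : Ext (𝟙_ C : C) (𝟙_ C : C) n),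
      (Ext.mk₀ (eqToHom hX₃)).comp T (zero_add n) =
        (Ext.mk₀ (eqToHom hX₃)).comp T' (zero_add n) → T = T' := by
    intro n T T' h
    have := congrArg (fun v => (Ext.mk₀ (eqToHom hX₃.symm)).comp v (zero_add n)) h
    simpa [Ext.mk₀_comp_mk₀_assoc, eqToHom_trans, eqToHom_refl] using this
  constructor
  · -- injectivity
    intro x y hxy
    have hz : ∀ i, (Ext.mk₀ (F i)).comp (x - y) (zero_add 1) = 0 := by
      intro i
      have : Φ x i = Φ y i := by rw [hxy]
      rw [hΦ x i, hΦ y i] at this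
      rw [sub_eq_add_neg, Ext.comp_add, Ext.comp_neg, this]
      simp [hF]
    have := hinj (x - y) hz
    exact sub_eq_zero.mp this
  · ext c
    constructor
    · rintro ⟨x, rfl⟩
      show (∑ i : ι, (b i).comp (Φ x i) rfl) = 0
      have : (∑ i : ι, (b i).comp (Φ x i) rfl) =
          ∑ i : ι, (b i).comp ((Ext.mk₀ (F i)).comp x (zero_add 1)) rfl :=
        Finset.sum_congr rfl fun i _ => by rw [hΦ x i]
      rw [this]
      apply cancel
      rw [cup x, extvan x, Ext.comp_zero]
    · intro hc
      have hc' : (∑ i : ι, (b i).comp (c i) rfl) = 0 := hc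
      -- construct the element of `Ext¹(X₁, (𝟙_ C : C))` with components `c`
      set y : Ext S.X₁ (𝟙_ C : C) 1 := ∑ j : ι, (Ext.mk₀ (H j)).comp (c j) (zero_add 1) with hy
      have hvan : hS.extClass.comp y rfl = 0 := by
        rw [hy, aux_comp_sum]
        have : (∑ j : ι, hS.extClass.comp ((Ext.mk₀ (H j)).comp (c j) (zero_add 1)) rfl) =
            ∑ j : ι, (Ext.mk₀ (eqToHom hX₃)).comp ((b j).comp (c j) rfl) (zero_add 2) := by
          refine Finset.sum_congr rfl (fun j _ => ?_)
          rw [← Ext.comp_assoc hS.extClass (Ext.mk₀ (H j)) (c j)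
              (add_zero 1) (zero_add 1) (by omega), ← hδ, hb j,
            Ext.comp_assoc (Ext.mk₀ (eqToHom hX₃)) (b j) (c j) (zero_add 1) rfl (by omega)]
        rw [this, ← aux_comp_sum, hc', Ext.comp_zero]
      obtain ⟨x, hx⟩ := Ext.contravariant_sequence_exact₁ hS (𝟙_ C : C) y rfl hvan
      refine ⟨x, funext fun i => ?_⟩
      have hcomp : (Ext.mk₀ (F i)).comp x (zero_add 1) =
          (Ext.mk₀ (biproduct.ι (fun (_ : ι) => (𝟙_ C : C)) i ≫ e.inv)).comp
            ((Ext.mk₀ S.f).comp x (zero_add 1)) (zero_add 1) := by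
        rw [Ext.mk₀_comp_mk₀_assoc, hF]
        simp only [Category.assoc]
      rw [hΦ x i]
      show (Ext.mk₀ (F i)).comp x (zero_add 1) = c i
      rw [hcomp, hx, hy, aux_comp_sum]
      have hterm : ∀ j : ι, (Ext.mk₀ (biproduct.ι (fun (_ : ι) => (𝟙_ C : C)) i ≫ e.inv)).comp
          ((Ext.mk₀ (H j)).comp (c j) (zero_add 1)) (zero_add 1) =
          if j = i then c j else 0 := by
        intro j
        rw [Ext.mk₀_comp_mk₀_assoc]
        have : (biproduct.ι (fun (_ : ι) => (𝟙_ C : C)) i ≫ e.inv) ≫ H j =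
            biproduct.ι (fun (_ : ι) => (𝟙_ C : C)) i ≫ biproduct.π (fun (_ : ι) => (𝟙_ C : C)) j := by
          simp [hH]
        rw [this]
        by_cases hij : j = i
        · subst hij
          rw [biproduct.ι_π_self, Ext.mk₀_id_comp, if_pos rfl]
        · rw [biproduct.ι_π_ne _ (Ne.symm hij), Ext.mk₀_zero, Ext.zero_comp, if_neg hij]
      rw [Finset.sum_congr rfl (fun j _ => hterm j), Finset.sum_ite_eq' Finset.univ i c,
        if_pos (Finset.mem_univ i)]
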